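/- arXiv:1607.08567 — 3 statements merged into one kernel-verified Lean document; each statement's English description precedes it below -/
import Mathlib

section
/- The operators U^m and S_r respect the module structure of M over R: for all m, n ∈ M and r, s ∈ R⁰, one has U^{m+n} ∘ S_r = S_r ∘ U^{r•m} ∘ U^{r•n}, and if moreover r + s ≠ 0 then U^m ∘ S_{r+s} = S_{r+s} ∘ U^{r•m} ∘ U^{s•m}. -/
open scoped ENNReal

section Aux

variable {I : Type*}

private lemma two_pos' : 0 < (2 : ℝ≥0∞).toReal := by norm_num

/-- norm-power of an extend-by-zero. -/
private lemma norm_ext0 (f : I → I) (hf : Function.Injective f) (x : I → ℂ) :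
    (fun j => ‖Function.extend f x 0 j‖ ^ (2 : ℝ≥0∞).toReal) =
      Function.extend f (fun i => ‖x i‖ ^ (2 : ℝ≥0∞).toReal) 0 := by
  funext j
  by_cases h : ∃ i, f i = j
  · obtain ⟨i, rfl⟩ := h
    rw [hf.extend_apply, hf.extend_apply]
  · rw [Function.extend_apply' _ _ _ h, Function.extend_apply' _ _ _ h]
    simp [Real.zero_rpow]

private lemma mem_ext0 (f : I → I) (hf : Function.Injective f)
    (x : lp (fun _ : I => ℂ) 2) : Memℓp (Function.extend f (⇑x) 0) 2 := by
  apply memℓp_gen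
  rw [norm_ext0 f hf]
  exact (summable_extend_zero hf).2 ((lp.memℓp x).summable two_pos')

noncomputable def Sop (f : I → I) (hf : Function.Injective f) :
    lp (fun _ : I => ℂ) 2 →ₗᵢ[ℂ] lp (fun _ : I => ℂ) 2 where
  toFun x := ⟨Function.extend f (⇑x) 0, mem_ext0 f hf x⟩
  map_add' x y := by
    apply lp.ext
    funext j
    by_cases h : ∃ i, f i = j
    · obtain ⟨i, rfl⟩ := h
      show Function.extend f (fun k => x k + y k) 0 (f i) = Function.extend f x 0 (f i) + Function.extend f y 0 (f i)
      simp [hf.extend_apply, lp.coeFn_add]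
    · show Function.extend f (fun k => x k + y k) 0 j = Function.extend f x 0 j + Function.extend f y 0 j
      simp [Function.extend_apply' _ _ _ h, lp.coeFn_add]
  map_smul' c x := by
    apply lp.ext
    funext j
    by_cases h : ∃ i, f i = j
    · obtain ⟨i, rfl⟩ := h
      simp [hf.extend_apply, lp.coeFn_smul]
    · simp [Function.extend_apply' _ _ _ h, lp.coeFn_smul]
  norm_map' x := by
    rw [lp.norm_eq_tsum_rpow two_pos', lp.norm_eq_tsum_rpow two_pos']
    congr 1
    have h1 : ∑' j, ‖Function.extend f (⇑x) 0 j‖ ^ (2 : ℝ≥0∞).toReal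
        = ∑' i, ‖x i‖ ^ (2 : ℝ≥0∞).toReal := by
      rw [norm_ext0 f hf, tsum_extend_zero hf]
    exact h1

@[simp] lemma Sop_apply_eq (f : I → I) (hf : Function.Injective f)
    (x : lp (fun _ : I => ℂ) 2) (i : I) : Sop f hf x (f i) = x i :=
  hf.extend_apply _ _ _

lemma Sop_apply_ne (f : I → I) (hf : Function.Injective f)
    (x : lp (fun _ : I => ℂ) 2) (j : I) (h : ¬∃ i, f i = j) : Sop f hf x j = 0 :=
  Function.extend_apply' _ _ _ h

private lemma mem_comp (e : I ≃ I) (x : lp (fun _ : I => ℂ) 2) :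
    Memℓp (⇑x ∘ e) 2 := by
  apply memℓp_gen
  exact (e.summable_iff (f := fun j => ‖x j‖ ^ (2 : ℝ≥0∞).toReal)).2
    ((lp.memℓp x).summable two_pos')

noncomputable def Uop (e : I ≃ I) :
    lp (fun _ : I => ℂ) 2 ≃ₗᵢ[ℂ] lp (fun _ : I => ℂ) 2 where
  toFun x := ⟨⇑x ∘ e, mem_comp e x⟩
  invFun x := ⟨⇑x ∘ e.symm, mem_comp e.symm x⟩
  left_inv x := by apply lp.ext; funext j; simp
  right_inv x := by apply lp.ext; funext j; simp
  map_add' x y := by apply lp.ext; funext j; simp [lp.coeFn_add]; rfl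
  map_smul' c x := by apply lp.ext; funext j; simp [lp.coeFn_smul]
  norm_map' x := by
    rw [lp.norm_eq_tsum_rpow two_pos', lp.norm_eq_tsum_rpow two_pos']
    congr 1
    exact e.tsum_eq (f := fun j => ‖x j‖ ^ (2 : ℝ≥0∞).toReal)

@[simp] lemma Uop_apply (e : I ≃ I) (x : lp (fun _ : I => ℂ) 2) (j : I) :
    Uop e x j = x (e j) := rfl

end Aux


/-- The operators `U^m` and `S_r` respect the module structure of `M` over
`R`: for all `m, n ∈ M` and `r, s ∈ R⁰`, one has
`U^{m+n} ∘ S_r = S_r ∘ U^{r•m} ∘ U^{r•n}`, and if moreover `r + s ≠ 0` then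
`U^m ∘ S_{r+s} = S_{r+s} ∘ U^{r•m} ∘ U^{s•m}`. -/
theorem fock_respects_module_structure
    {R : Type} [CommRing R] [IsDomain R] {M : Type} [AddCommGroup M] [Module R M] :
    ∃ (U : M → (lp (fun _ : M × (nonZeroDivisors R) => ℂ) 2 ≃ₗᵢ[ℂ]
                lp (fun _ : M × (nonZeroDivisors R) => ℂ) 2))
      (S : nonZeroDivisors R → (lp (fun _ : M × (nonZeroDivisors R) => ℂ) 2 →ₗᵢ[ℂ]
                                lp (fun _ : M × (nonZeroDivisors R) => ℂ) 2)),
      -- `U k` is the operator `U^k`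
      (∀ (k : M) (x : lp (fun _ : M × (nonZeroDivisors R) => ℂ) 2) (n : M)
          (t : nonZeroDivisors R),
        U k x (n, t) = x (n - (t : R) • k, t)) ∧
      -- `S r` is the operator `S_r`
      (∀ (r : nonZeroDivisors R) (x : lp (fun _ : M × (nonZeroDivisors R) => ℂ) 2)
          (n : M) (t : nonZeroDivisors R),
        S r x (n, r * t) = x (n, t)) ∧
      (∀ (r : nonZeroDivisors R) (x : lp (fun _ : M × (nonZeroDivisors R) => ℂ) 2)
          (n : M) (s : nonZeroDivisors R),
        (¬ ∃ t : nonZeroDivisors R, (s : R) = (r : R) * (t : R)) → S r x (n, s) = 0) ∧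
      -- `U^{m+n} ∘ S_r = S_r ∘ U^{r•m} ∘ U^{r•n}`
      (∀ (m n : M) (r : nonZeroDivisors R)
          (x : lp (fun _ : M × (nonZeroDivisors R) => ℂ) 2),
        U (m + n) (S r x) = S r (U ((r : R) • m) (U ((r : R) • n) x))) ∧
      -- if `r + s ≠ 0` then `U^m ∘ S_{r+s} = S_{r+s} ∘ U^{r•m} ∘ U^{s•m}`
      (∀ (m : M) (r s : nonZeroDivisors R) (h : (r : R) + (s : R) ≠ 0)
          (x : lp (fun _ : M × (nonZeroDivisors R) => ℂ) 2),
        U m (S ⟨(r : R) + (s : R), mem_nonZeroDivisors_of_ne_zero h⟩ x) =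
          S ⟨(r : R) + (s : R), mem_nonZeroDivisors_of_ne_zero h⟩
            (U ((r : R) • m) (U ((s : R) • m) x))) := by
  classical
  let eU : M → (M × (nonZeroDivisors R)) ≃ (M × (nonZeroDivisors R)) := fun k =>
    { toFun := fun p => (p.1 - (p.2 : R) • k, p.2)
      invFun := fun p => (p.1 + (p.2 : R) • k, p.2)
      left_inv := fun p => by simp
      right_inv := fun p => by simp }
  let fS : nonZeroDivisors R → (M × (nonZeroDivisors R)) → (M × (nonZeroDivisors R)) :=
    fun r p => (p.1, r * p.2)
  have fS_inj : ∀ r, Function.Injective (fS r) := by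
    intro r p q h
    have h0 := congrArg Prod.fst h
    have h1 : p.1 = q.1 := h0
    have h2 : (r : R) * (p.2 : R) = (r : R) * (q.2 : R) := by
      have := congrArg Prod.snd h
      exact_mod_cast congrArg (fun z : nonZeroDivisors R => (z : R)) this
    have h3 : p.2 = q.2 :=
      Subtype.ext (mul_left_cancel₀ (nonZeroDivisors.coe_ne_zero r) h2)
    exact Prod.ext h1 h3
  refine ⟨fun k => Uop (eU k), fun r => Sop (fS r) (fS_inj r), ?_, ?_, ?_, ?_, ?_⟩
  · intro k x n t
    rfl
  · intro r x n t
    exact Sop_apply_eq (fS r) (fS_inj r) x (n, t)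
  · intro r x n s h
    apply Sop_apply_ne
    rintro ⟨⟨q, t⟩, ht⟩
    refine h ⟨t, ?_⟩
    have h2 : (⟨(r : R) * (t : R), (r * t).2⟩ : nonZeroDivisors R) = s :=
      congrArg Prod.snd ht
    exact (congrArg (fun z : nonZeroDivisors R => (z : R)) h2).symm
  · intro m n r x
    apply lp.ext
    funext j
    obtain ⟨p, s⟩ := j
    by_cases h : ∃ t : nonZeroDivisors R, r * t = s
    · obtain ⟨t, rfl⟩ := h
      have lhs : (Uop (eU (m + n)) (Sop (fS r) (fS_inj r) x)) (p, r * t)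
          = x (p - ((r : R) * (t : R)) • (m + n), t) := by
        show (Sop (fS r) (fS_inj r) x)
          (fS r (p - ((r : R) * (t : R)) • (m + n), t)) = _
        exact Sop_apply_eq _ _ _ _
      have rhs : (Sop (fS r) (fS_inj r)
            (Uop (eU ((r : R) • m)) (Uop (eU ((r : R) • n)) x))) (p, r * t)
          = x (p - (t : R) • ((r : R) • m) - (t : R) • ((r : R) • n), t) := by
        show (Sop (fS r) (fS_inj r)
          (Uop (eU ((r : R) • m)) (Uop (eU ((r : R) • n)) x))) (fS r (p, t)) = _
        rw [Sop_apply_eq]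
        rfl
      have hidx : p - ((r : R) * (t : R)) • (m + n)
          = p - (t : R) • ((r : R) • m) - (t : R) • ((r : R) • n) := by module
      rw [lhs, rhs, hidx]
    · simp only [Uop_apply]
      have h1 : ¬∃ i, fS r i = eU (m + n) (p, s) := by
        rintro ⟨⟨q, t⟩, ht⟩
        exact h ⟨t, congrArg Prod.snd ht⟩
      have h2 : ¬∃ i, fS r i = (p, s) := by
        rintro ⟨⟨q, t⟩, ht⟩
        exact h ⟨t, congrArg Prod.snd ht⟩
      rw [Sop_apply_ne _ _ _ _ h1, Sop_apply_ne _ _ _ _ h2]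
  · intro m r s h x
    apply lp.ext
    funext j
    obtain ⟨p, u⟩ := j
    set r' : nonZeroDivisors R := ⟨(r : R) + (s : R), mem_nonZeroDivisors_of_ne_zero h⟩
    by_cases hu : ∃ t : nonZeroDivisors R, r' * t = u
    · obtain ⟨t, rfl⟩ := hu
      have lhs : (Uop (eU m) (Sop (fS r') (fS_inj r') x)) (p, r' * t)
          = x (p - (((r : R) + (s : R)) * (t : R)) • m, t) := by
        show (Sop (fS r') (fS_inj r') x)
          (fS r' (p - (((r : R) + (s : R)) * (t : R)) • m, t)) = _
        exact Sop_apply_eq _ _ _ _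
      have rhs : (Sop (fS r') (fS_inj r')
            (Uop (eU ((r : R) • m)) (Uop (eU ((s : R) • m)) x))) (p, r' * t)
          = x (p - (t : R) • ((r : R) • m) - (t : R) • ((s : R) • m), t) := by
        show (Sop (fS r') (fS_inj r')
          (Uop (eU ((r : R) • m)) (Uop (eU ((s : R) • m)) x))) (fS r' (p, t)) = _
        rw [Sop_apply_eq]
        rfl
      have hidx : p - (((r : R) + (s : R)) * (t : R)) • m
          = p - (t : R) • ((r : R) • m) - (t : R) • ((s : R) • m) := by module
      rw [lhs, rhs, hidx]
    · simp only [Uop_apply]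
      have h1 : ¬∃ i, fS r' i = eU m (p, u) := by
        rintro ⟨⟨q, t⟩, ht⟩
        exact hu ⟨t, congrArg Prod.snd ht⟩
      have h2 : ¬∃ i, fS r' i = (p, u) := by
        rintro ⟨⟨q, t⟩, ht⟩
        exact hu ⟨t, congrArg Prod.snd ht⟩
      rw [Sop_apply_ne _ _ _ _ h1, Sop_apply_ne _ _ _ _ h2]
end

section
/- Let X = [-1, 1] ⊆ ℝ, let σ : X → X be σ(t) = t², and let f ∈ C(X, ℝ) be f(t) = t, so that f ∘ σ^n is the function t ↦ t^(2^n). Then the function t ↦ t³ does NOT belong to the topological closure in C([-1,1], ℝ) (supremum norm) of the ℝ-linear span of {1, t ↦ t} ∪ {t ↦ t^(2^n) : n ≥ 1}. In particular ⟨⟨f⟩⟩_σ is not closed under multiplication (it contains t but not t³ = t·t·t), so ⟨⟨f⟩⟩_σ is not a subalgebra of C(X). -/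
/-- The squaring map `t ↦ t²` on `X = [-1, 1]`. -/
def sqMap : Set.Icc (-1 : ℝ) 1 → Set.Icc (-1 : ℝ) 1 := fun t =>
  ⟨(t : ℝ) ^ 2, by
    obtain ⟨ht1, ht2⟩ := t.2
    constructor <;> nlinarith⟩

lemma sqMap_continuous : Continuous sqMap :=
  Continuous.subtype_mk (continuous_subtype_val.pow 2) _

/-- The monomial `t ↦ t^k` as an element of `C([-1,1], ℝ)`. -/
noncomputable def mono (k : ℕ) : C(Set.Icc (-1 : ℝ) 1, ℝ) :=
  ⟨fun t => (t : ℝ) ^ k, continuous_subtype_val.pow k⟩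

noncomputable def cyclicSpaceR {X : Type} [TopologicalSpace X] (σ : X → X) (hσ : Continuous σ)
    (f : C(X, ℝ)) : Set C(X, ℝ) :=
  closure (↑(Submodule.span ℝ ({1} ∪ Set.range fun k : ℕ =>
    (⟨fun x => f (σ^[k] x), f.continuous.comp (hσ.iterate k)⟩ : C(X, ℝ)))))

namespace Aux

noncomputable def p1 : Set.Icc (-1 : ℝ) 1 := ⟨1, by constructor <;> norm_num⟩
noncomputable def p2 : Set.Icc (-1 : ℝ) 1 := ⟨-1, by constructor <;> norm_num⟩
noncomputable def p3 : Set.Icc (-1 : ℝ) 1 := ⟨1/2, by constructor <;> norm_num⟩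
noncomputable def p4 : Set.Icc (-1 : ℝ) 1 := ⟨-(1/2), by constructor <;> norm_num⟩

noncomputable def Phi : C(Set.Icc (-1 : ℝ) 1, ℝ) →ₗ[ℝ] ℝ where
  toFun g := (g p1 - g p2) - 2 * (g p3 - g p4)
  map_add' g h := by simp; ring
  map_smul' c g := by simp; ring

lemma Phi_continuous : Continuous (Phi : C(Set.Icc (-1 : ℝ) 1, ℝ) → ℝ) := by
  have h : ∀ x : Set.Icc (-1:ℝ) 1, Continuous fun g : C(Set.Icc (-1:ℝ) 1, ℝ) => g x :=
    fun x => continuous_eval_const x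
  exact (((h p1).sub (h p2)).sub (continuous_const.mul ((h p3).sub (h p4))))

lemma iter_sq (k : ℕ) (x : Set.Icc (-1:ℝ) 1) : (sqMap^[k] x : ℝ) = (x : ℝ) ^ (2 ^ k) := by
  induction k with
  | zero => simp
  | succ n ih =>
    rw [Function.iterate_succ_apply']
    show ((sqMap^[n] x : ℝ)) ^ 2 = _
    rw [ih, ← pow_mul, pow_succ]

lemma comp_eq (k : ℕ) :
    (⟨fun x => mono 1 (sqMap^[k] x),
      (mono 1).continuous.comp (sqMap_continuous.iterate k)⟩ : C(Set.Icc (-1:ℝ) 1, ℝ))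
      = mono (2 ^ k) := by
  ext x
  show mono 1 (sqMap^[k] x) = (x : ℝ) ^ (2 ^ k)
  show (sqMap^[k] x : ℝ) ^ 1 = _
  rw [pow_one, iter_sq]

lemma gens_eq :
    ({1} ∪ Set.range fun k : ℕ =>
      (⟨fun x => (mono 1) (sqMap^[k] x),
        (mono 1).continuous.comp (sqMap_continuous.iterate k)⟩ : C(Set.Icc (-1:ℝ) 1, ℝ)))
    = ({1, mono 1} ∪ {g : C(Set.Icc (-1 : ℝ) 1, ℝ) | ∃ n : ℕ, 1 ≤ n ∧ g = mono (2 ^ n)}) := by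
  ext g
  simp only [Set.mem_union, Set.mem_singleton_iff, Set.mem_range, Set.mem_insert_iff,
    Set.mem_setOf_eq, comp_eq]
  constructor
  · rintro (h | ⟨k, rfl⟩)
    · exact Or.inl (Or.inl h)
    · rcases Nat.eq_zero_or_pos k with rfl | hk
      · exact Or.inl (Or.inr (by norm_num))
      · exact Or.inr ⟨k, hk, rfl⟩
  · rintro ((h | h) | ⟨n, _, rfl⟩)
    · exact Or.inl h
    · exact Or.inr ⟨0, by rw [h]; norm_num⟩
    · exact Or.inr ⟨n, rfl⟩

lemma Phi_vanishes :
    (Submodule.span ℝ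
      ({1, mono 1} ∪ {g : C(Set.Icc (-1 : ℝ) 1, ℝ) | ∃ n : ℕ, 1 ≤ n ∧ g = mono (2 ^ n)}))
      ≤ LinearMap.ker Phi := by
  rw [Submodule.span_le]
  rintro g ((h | h) | ⟨n, hn, rfl⟩) <;> simp only [SetLike.mem_coe, LinearMap.mem_ker]
  · subst h
    show ((1:ℝ) - 1) - 2 * ((1:ℝ) - 1) = 0
    ring
  · subst h
    show (((p1:ℝ))^1 - ((p2:ℝ))^1) - 2 * (((p3:ℝ))^1 - ((p4:ℝ))^1) = 0
    simp [p1, p2, p3, p4]; norm_num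
  · show (((p1:ℝ))^(2^n) - ((p2:ℝ))^(2^n)) - 2 * (((p3:ℝ))^(2^n) - ((p4:ℝ))^(2^n)) = 0
    have he : Even (2 ^ n) := Nat.even_pow.mpr ⟨even_two, by omega⟩
    have h2 : ((p2:ℝ))^(2^n) = ((p1:ℝ))^(2^n) := by
      show ((-1:ℝ))^(2^n) = (1:ℝ)^(2^n); rw [he.neg_one_pow, one_pow]
    have h4 : ((p4:ℝ))^(2^n) = ((p3:ℝ))^(2^n) := by
      show ((-(1/2):ℝ))^(2^n) = ((1/2:ℝ))^(2^n); exact he.neg_pow _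
    rw [h2, h4]; ring

lemma Phi_cube : Phi (mono 3) = 3/2 := by
  show (((p1:ℝ))^3 - ((p2:ℝ))^3) - 2 * (((p3:ℝ))^3 - ((p4:ℝ))^3) = 3/2
  simp [p1, p2, p3, p4]; norm_num

end Aux

/-- For `X = [-1,1]`, `σ(t) = t²` and `f(t) = t` (so `f ∘ σ^n (t) = t^(2^n)`),
the function `t ↦ t³` does not belong to the sup-norm closure of the `ℝ`-linear span of
`{1, t ↦ t} ∪ {t ↦ t^(2^n) : n ≥ 1}`.  In particular `⟨⟨f⟩⟩_σ` contains `t` but not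
`t³ = t·t·t`, so it is not closed under multiplication and is not a subalgebra of `C(X)`. -/
theorem cube_not_in_cyclic_space_of_squaring :
    mono 3 ∉ closure (↑(Submodule.span ℝ
        ({1, mono 1} ∪ {g : C(Set.Icc (-1 : ℝ) 1, ℝ) | ∃ n : ℕ, 1 ≤ n ∧ g = mono (2 ^ n)}))
        : Set C(Set.Icc (-1 : ℝ) 1, ℝ)) ∧
    cyclicSpaceR sqMap sqMap_continuous (mono 1) =
      closure (↑(Submodule.span ℝ
        ({1, mono 1} ∪ {g : C(Set.Icc (-1 : ℝ) 1, ℝ) | ∃ n : ℕ, 1 ≤ n ∧ g = mono (2 ^ n)}))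
        : Set C(Set.Icc (-1 : ℝ) 1, ℝ)) ∧
    mono 1 ∈ cyclicSpaceR sqMap sqMap_continuous (mono 1) ∧
    mono 1 * mono 1 * mono 1 ∉ cyclicSpaceR sqMap sqMap_continuous (mono 1) ∧
    ¬ ∃ A : Subalgebra ℝ C(Set.Icc (-1 : ℝ) 1, ℝ),
        (A : Set C(Set.Icc (-1 : ℝ) 1, ℝ)) = cyclicSpaceR sqMap sqMap_continuous (mono 1) := by
  have hclosed : IsClosed {g : C(Set.Icc (-1:ℝ) 1, ℝ) | Aux.Phi g = 0} :=
    isClosed_singleton.preimage Aux.Phi_continuous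
  have hnot : mono 3 ∉ closure (↑(Submodule.span ℝ
      ({1, mono 1} ∪ {g : C(Set.Icc (-1 : ℝ) 1, ℝ) | ∃ n : ℕ, 1 ≤ n ∧ g = mono (2 ^ n)}))
      : Set C(Set.Icc (-1 : ℝ) 1, ℝ)) := by
    intro hmem
    have hsub : closure (↑(Submodule.span ℝ
        ({1, mono 1} ∪ {g : C(Set.Icc (-1 : ℝ) 1, ℝ) | ∃ n : ℕ, 1 ≤ n ∧ g = mono (2 ^ n)}))
        : Set C(Set.Icc (-1 : ℝ) 1, ℝ)) ⊆ {g | Aux.Phi g = 0} := by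
      apply closure_minimal _ hclosed
      intro g hg
      exact Aux.Phi_vanishes hg
    have := hsub hmem
    simp only [Set.mem_setOf_eq, Aux.Phi_cube] at this
    norm_num at this
  have heq : cyclicSpaceR sqMap sqMap_continuous (mono 1) =
      closure (↑(Submodule.span ℝ
        ({1, mono 1} ∪ {g : C(Set.Icc (-1 : ℝ) 1, ℝ) | ∃ n : ℕ, 1 ≤ n ∧ g = mono (2 ^ n)}))
        : Set C(Set.Icc (-1 : ℝ) 1, ℝ)) := by
    unfold cyclicSpaceR
    rw [Aux.gens_eq]
  have hcube : mono 1 * mono 1 * mono 1 = mono 3 := by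
    ext x
    show (x:ℝ)^1 * (x:ℝ)^1 * (x:ℝ)^1 = (x:ℝ)^3
    ring
  have hm1 : mono 1 ∈ cyclicSpaceR sqMap sqMap_continuous (mono 1) := by
    rw [heq]
    apply subset_closure
    exact Submodule.subset_span (Or.inl (Or.inr rfl))
  have hm3 : mono 1 * mono 1 * mono 1 ∉ cyclicSpaceR sqMap sqMap_continuous (mono 1) := by
    rw [hcube, heq]; exact hnot
  refine ⟨hnot, heq, hm1, hm3, ?_⟩
  rintro ⟨A, hA⟩
  apply hm3
  rw [← hA]
  have h1 : mono 1 ∈ A := by rw [← SetLike.mem_coe, hA]; exact hm1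
  exact mul_mem (mul_mem h1 h1) h1
end

section
/- Let X and Y be compact Hausdorff spaces with continuous maps σ : X → X and τ : Y → Y, and let π : C(X, ℂ) → C(Y, ℂ) be a continuous surjective unital ℂ-algebra homomorphism satisfying π(f ∘ σ) = π(f) ∘ τ for all f ∈ C(X, ℂ). If there exist f₁, …, fₙ ∈ C(X, ℂ) with ⟨⟨f₁, …, fₙ⟩⟩_σ = C(X, ℂ), then ⟨⟨π(f₁), …, π(fₙ)⟩⟩_τ = C(Y, ℂ); in particular, if (X, σ) is finitely generated then so is (Y, τ). -/
/-- `⟨⟨f⟩⟩_σ`: the closure in `C(X, ℂ)` of the `ℂ`-linear span of `{1} ∪ {f ∘ σ^k : k ∈ ℕ}`. -/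
noncomputable def cyclicSpace {X : Type} [TopologicalSpace X] (σ : X → X) (hσ : Continuous σ)
    (f : C(X, ℂ)) : Set C(X, ℂ) :=
  closure (↑(Submodule.span ℂ ({1} ∪ Set.range fun k : ℕ =>
    (⟨fun x => f (σ^[k] x), f.continuous.comp (hσ.iterate k)⟩ : C(X, ℂ)))))

/-- `⟨⟨f₁, …, fₙ⟩⟩_σ`: the closure of the `ℂ`-linear span of all products `g₁ ⋯ gₙ`
with `gᵢ ∈ ⟨⟨fᵢ⟩⟩_σ`. -/
noncomputable def genSpace {X : Type} [TopologicalSpace X] (σ : X → X) (hσ : Continuous σ)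
    {n : ℕ} (f : Fin n → C(X, ℂ)) : Set C(X, ℂ) :=
  closure (↑(Submodule.span ℂ {g : C(X, ℂ) | ∃ gv : Fin n → C(X, ℂ),
    (∀ i, gv i ∈ cyclicSpace σ hσ (f i)) ∧ g = ∏ i, gv i}))

/-- If `π : C(X, ℂ) → C(Y, ℂ)` is a continuous surjective unital `ℂ`-algebra
homomorphism intertwining the actions of `σ` and `τ` (i.e. `π(f ∘ σ) = π(f) ∘ τ`), and
`⟨⟨f₁, …, fₙ⟩⟩_σ = C(X, ℂ)`, then `⟨⟨π(f₁), …, π(fₙ)⟩⟩_τ = C(Y, ℂ)`; in particular if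
`(X, σ)` is finitely generated then so is `(Y, τ)`. -/
theorem quotient_of_finitely_generated_is_finitely_generated
    (X Y : Type) [TopologicalSpace X] [CompactSpace X] [T2Space X]
    [TopologicalSpace Y] [CompactSpace Y] [T2Space Y]
    (σ : X → X) (hσ : Continuous σ) (τ : Y → Y) (hτ : Continuous τ)
    (π : C(X, ℂ) →ₐ[ℂ] C(Y, ℂ)) (hcont : Continuous π) (hsurj : Function.Surjective π)
    (hcov : ∀ f : C(X, ℂ), π (f.comp ⟨σ, hσ⟩) = (π f).comp ⟨τ, hτ⟩)
    (n : ℕ) (f : Fin n → C(X, ℂ)) (hgen : genSpace σ hσ f = Set.univ) :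
    genSpace τ hτ (fun i => π (f i)) = Set.univ := by
  -- intertwining for iterates
  have hiter : ∀ (g : C(X, ℂ)) (k : ℕ),
      π (⟨fun x => g (σ^[k] x), g.continuous.comp (hσ.iterate k)⟩ : C(X, ℂ))
        = (⟨fun y => (π g) (τ^[k] y), (π g).continuous.comp (hτ.iterate k)⟩ : C(Y, ℂ)) := by
    intro g k
    induction k with
    | zero =>
      have h1 : (⟨fun x => g (σ^[0] x), g.continuous.comp (hσ.iterate 0)⟩ : C(X, ℂ)) = g := by
        ext x; simp
      rw [h1]; ext y; simp
    | succ k ih =>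
      have h1 : (⟨fun x => g (σ^[k+1] x), g.continuous.comp (hσ.iterate (k+1))⟩ : C(X, ℂ))
          = (⟨fun x => g (σ^[k] x), g.continuous.comp (hσ.iterate k)⟩ : C(X, ℂ)).comp ⟨σ, hσ⟩ := by
        ext x; simp [Function.iterate_succ_apply]
      rw [h1, hcov, ih]; ext y; simp [Function.iterate_succ_apply]
  -- image of cyclic spaces
  have hcyc : ∀ g : C(X, ℂ), π '' cyclicSpace σ hσ g ⊆ cyclicSpace τ hτ (π g) := by
    intro g
    refine (image_closure_subset_closure_image hcont).trans (closure_mono ?_)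
    have hmap : π '' ↑(Submodule.span ℂ ({1} ∪ Set.range fun k : ℕ =>
        (⟨fun x => g (σ^[k] x), g.continuous.comp (hσ.iterate k)⟩ : C(X, ℂ))))
        = ↑(Submodule.map π.toLinearMap (Submodule.span ℂ ({1} ∪ Set.range fun k : ℕ =>
        (⟨fun x => g (σ^[k] x), g.continuous.comp (hσ.iterate k)⟩ : C(X, ℂ))))) := rfl
    rw [hmap, Submodule.map_span]
    refine SetLike.coe_subset_coe.mpr (Submodule.span_mono ?_)
    rintro _ ⟨h, hh, rfl⟩
    rcases hh with h1 | ⟨k, rfl⟩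
    · left; simp only [Set.mem_singleton_iff] at h1 ⊢; rw [h1]
      exact map_one π
    · right; exact ⟨k, (hiter g k).symm⟩
  -- image of genSpace
  have hgs : π '' genSpace σ hσ f ⊆ genSpace τ hτ (fun i => π (f i)) := by
    refine (image_closure_subset_closure_image hcont).trans (closure_mono ?_)
    have hmap : ∀ S : Set C(X, ℂ), π '' ↑(Submodule.span ℂ S)
        = ↑(Submodule.map π.toLinearMap (Submodule.span ℂ S)) := fun S => rfl
    rw [hmap, Submodule.map_span]
    refine SetLike.coe_subset_coe.mpr (Submodule.span_mono ?_)
    rintro _ ⟨h, ⟨gv, hgv, rfl⟩, rfl⟩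
    refine ⟨fun i => π (gv i), fun i => hcyc (f i) ⟨gv i, hgv i, rfl⟩, ?_⟩
    simp [map_prod]
  have : Set.univ ⊆ genSpace τ hτ (fun i => π (f i)) := by
    intro y _
    obtain ⟨x, rfl⟩ := hsurj y
    exact hgs ⟨x, by rw [hgen]; trivial, rfl⟩
  exact Set.eq_univ_of_univ_subset this
end
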